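/- Fix natural numbers g, r, m and a field k. Let rels : Fin r → FreeGroup (Fin g), and let Γ be the presented group on the generators Fin g with relators {rels j}. Let ι : FreeGroup (Fin g) →* FreeGroup (Fin g ⊕ Fin m) be the homomorphism induced by the inclusion of generators, let extra : Fin m → FreeGroup (Fin g ⊕ Fin m), and let Γ' be the presented group on the generators Fin g ⊕ Fin m with relators {ι(rels j)} ∪ {extra i}. Let φ : Γ →* Γ' be the homomorphism determined by sending the class of each generator of Fin g in Γ to the class of the corresponding generator in Γ' (this is well defined since each relator of Γ maps to a relator of Γ'). Let A be a representation of Γ' on a finite-dimensional k-vector space, and let φ*A be its pullback to Γ. If the k-dimension of H⁰(Γ; φ*A) equals the k-dimension of H⁰(Γ'; A), then the k-dimension of H¹(Γ; φ*A) is at most the k-dimension of H¹(Γ'; A). -/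

import Mathlib

open Module groupCohomology

namespace PresExt

variable {k : Type} [Field k] {G : Type} [Group G]

/-- The action of `G` on `Multiplicative B` coming from a representation. -/
noncomputable def ρAut (B : Rep k G) : G →* MulAut (Multiplicative B) where
  toFun g := AddEquiv.toMultiplicative
    { toFun := B.ρ g
      invFun := B.ρ g⁻¹
      left_inv := fun x => by
        have : (B.ρ g⁻¹ * B.ρ g) x = x := by rw [← map_mul, inv_mul_cancel, map_one]; rfl
        simpa using this
      right_inv := fun x => by
        have : (B.ρ g * B.ρ g⁻¹) x = x := by rw [← map_mul, mul_inv_cancel, map_one]; rfl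
        simpa using this
      map_add' := map_add _ }
  map_one' := by
    ext x
    show Multiplicative.ofAdd (B.ρ 1 (Multiplicative.toAdd x)) = x
    simp
  map_mul' g h := by
    ext x
    show Multiplicative.ofAdd (B.ρ (g*h) (Multiplicative.toAdd x)) = _
    simp [map_mul]
    rfl

@[simp] lemma ρAut_apply (B : Rep k G) (g : G) (x : Multiplicative B) :
    ρAut B g x = Multiplicative.ofAdd (B.ρ g (Multiplicative.toAdd x)) := rfl


/-- The monoid hom `G →* Multiplicative B ⋊ G` attached to a 1-cocycle. -/
noncomputable def cocycleHom (B : Rep k G) (f : cocycles₁ B) :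
    G →* SemidirectProduct (Multiplicative B) G (ρAut B) where
  toFun g := ⟨Multiplicative.ofAdd (f.1 g), g⟩
  map_one' := by
    ext
    · show Multiplicative.ofAdd (f.1 1) = 1
      simp [cocycles₁_map_one]
    · rfl
  map_mul' g h := by
    ext
    · show Multiplicative.ofAdd (f.1 (g * h)) = _
      rw [SemidirectProduct.mul_left]
      show _ = Multiplicative.ofAdd (f.1 g) * (ρAut B g) (Multiplicative.ofAdd (f.1 h))
      rw [ρAut_apply]
      rw [← ofAdd_add]
      rw [(mem_cocycles₁_iff (A := B) f.1).1 f.2 g h]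
      simp [add_comm]
    · rfl

section Free

variable {β : Type} (B : Rep k G) (π : FreeGroup β →* G)

/-- The hom `FreeGroup β →* Multiplicative B ⋊ G` determined by values `v` on generators. -/
noncomputable def ψ (v : β → B) : FreeGroup β →* SemidirectProduct (Multiplicative B) G (ρAut B) :=
  FreeGroup.lift fun i => ⟨Multiplicative.ofAdd (v i), π (FreeGroup.of i)⟩

/-- The free 1-cocycle with values `v` on generators. -/
noncomputable def cfree (v : β → B) (x : FreeGroup β) : B :=
  Multiplicative.toAdd (ψ B π v x).left

lemma ψ_right (v : β → B) (x : FreeGroup β) : (ψ B π v x).right = π x := by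
  have h : SemidirectProduct.rightHom.comp (ψ B π v) = π :=
    FreeGroup.ext_hom _ _ (fun i => by simp [ψ])
  exact DFunLike.congr_fun h x

@[simp] lemma cfree_of (v : β → B) (i : β) : cfree B π v (FreeGroup.of i) = v i := by
  simp [cfree, ψ]

@[simp] lemma cfree_pure (v : β → B) (i : β) : cfree B π v (pure i) = v i :=
  cfree_of B π v i

lemma cfree_mul (v : β → B) (x y : FreeGroup β) :
    cfree B π v (x * y) = cfree B π v x + B.ρ (π x) (cfree B π v y) := by
  simp [cfree, map_mul, SemidirectProduct.mul_left, ψ_right]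

@[simp] lemma cfree_one (v : β → B) : cfree B π v 1 = 0 := by
  simp [cfree, map_one]

lemma cfree_inv (v : β → B) (x : FreeGroup β) :
    cfree B π v x⁻¹ = - B.ρ (π x⁻¹) (cfree B π v x) := by
  have := cfree_mul B π v x⁻¹ x
  rw [inv_mul_cancel, cfree_one] at this
  exact eq_neg_of_add_eq_zero_left this.symm

lemma cfree_add (v w : β → B) (x : FreeGroup β) :
    cfree B π v x + cfree B π w x = cfree B π (v + w) x := by
  induction x using FreeGroup.induction_on with
  | C1 => simp
  | of i => simp
  | inv_of i h =>
    rw [cfree_inv, cfree_inv, cfree_inv, ← h]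
    simp only [map_add]
    abel
  | mul x y hx hy =>
    rw [cfree_mul, cfree_mul, cfree_mul, ← hx, ← hy]
    simp only [map_add]
    abel

lemma cfree_smul (a : k) (v : β → B) (x : FreeGroup β) :
    a • cfree B π v x = cfree B π (a • v) x := by
  induction x using FreeGroup.induction_on with
  | C1 => simp
  | of i => simp
  | inv_of i h =>
    rw [cfree_inv, cfree_inv, ← h]
    simp only [map_smul, smul_neg]
  | mul x y hx hy =>
    rw [cfree_mul, cfree_mul, ← hx, ← hy]
    simp only [map_smul, smul_add]

/-- Evaluation of free cocycles at relators, as a linear map. -/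
noncomputable def relEval {ι : Type} (rel : ι → FreeGroup β) : (β → B) →ₗ[k] (ι → B) where
  toFun v := fun j => cfree B π v (rel j)
  map_add' v w := funext fun j => (cfree_add B π v w (rel j)).symm
  map_smul' a v := funext fun j => (cfree_smul B π a v (rel j)).symm

end Free

section Presented

variable {β ι : Type} {S : Set (FreeGroup β)} {rel : ι → FreeGroup β}
  (B : Rep k (PresentedGroup S))

/-- Restriction of a 1-cocycle to the generators. -/
noncomputable def res : cocycles₁ B →ₗ[k] (β → B) where
  toFun f := fun i => f.1 (PresentedGroup.of i)
  map_add' _ _ := rfl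
  map_smul' _ _ := rfl

lemma cocycle_comp_eq (f : cocycles₁ B) (x : FreeGroup β) :
    f.1 (PresentedGroup.mk S x) = cfree B (PresentedGroup.mk S) (res B f) x := by
  have h : (cocycleHom B f).comp (PresentedGroup.mk S) = ψ B (PresentedGroup.mk S) (res B f) := by
    refine FreeGroup.ext_hom _ _ (fun i => ?_)
    show (⟨Multiplicative.ofAdd (f.1 (PresentedGroup.of i)), PresentedGroup.of i⟩ :
      SemidirectProduct _ _ _) = _
    simp [ψ, res]
    rfl
  have := DFunLike.congr_fun h x
  exact congrArg Multiplicative.toAdd (congrArg SemidirectProduct.left this)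

lemma mk_rel_eq_one (hS : S = Set.range rel) (j : ι) : PresentedGroup.mk S (rel j) = 1 := by
  have : rel j ∈ Subgroup.normalClosure S :=
    Subgroup.subset_normalClosure (hS ▸ Set.mem_range_self j)
  exact (QuotientGroup.eq_one_iff _).2 this

lemma relEval_res (hS : S = Set.range rel) (f : cocycles₁ B) :
    relEval B (PresentedGroup.mk S) rel (res B f) = 0 := by
  funext j
  show cfree B (PresentedGroup.mk S) (res B f) (rel j) = 0
  rw [← cocycle_comp_eq, mk_rel_eq_one hS]
  exact cocycles₁_map_one f

lemma res_injective : Function.Injective (res B) := by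
  rw [← LinearMap.ker_eq_bot, eq_bot_iff]
  intro f hf
  have hf' : res B f = 0 := hf
  have hzero : ∀ x : FreeGroup β, cfree B (PresentedGroup.mk S) (0 : β → B) x = 0 := by
    intro x
    have h : ψ B (PresentedGroup.mk S) (0 : β → B) =
        SemidirectProduct.inr.comp (PresentedGroup.mk S) := by
      refine FreeGroup.ext_hom _ _ (fun i => ?_)
      simp only [ψ, FreeGroup.lift_apply_of, MonoidHom.comp_apply]
      ext
      · rfl
      · rfl
    show Multiplicative.toAdd (ψ B (PresentedGroup.mk S) (0 : β → B) x).left = 0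
    rw [h]
    rfl
  have : f.1 = 0 := by
    funext γ
    obtain ⟨x, rfl⟩ := QuotientGroup.mk'_surjective (Subgroup.normalClosure S) γ
    have := cocycle_comp_eq B f x
    rw [hf'] at this
    rw [show (QuotientGroup.mk' (Subgroup.normalClosure S)) x = PresentedGroup.mk S x from rfl]
    rw [this, hzero]
    rfl
  show f ∈ (⊥ : Submodule k (cocycles₁ B))
  rw [Submodule.mem_bot]
  exact Subtype.ext this

lemma ker_relEval_le_range_res (hS : S = Set.range rel) :
    LinearMap.ker (relEval B (PresentedGroup.mk S) rel) ≤ LinearMap.range (res B) := by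
  intro v hv
  have hv' : ∀ j, cfree B (PresentedGroup.mk S) v (rel j) = 0 := fun j => congr_fun hv j
  have hrel : ∀ s ∈ S, FreeGroup.lift
      (fun i => (⟨Multiplicative.ofAdd (v i), PresentedGroup.mk S (FreeGroup.of i)⟩ :
        SemidirectProduct (Multiplicative B) _ (ρAut B))) s = 1 := by
    intro s hs
    rw [hS] at hs
    obtain ⟨j, rfl⟩ := hs
    show ψ B (PresentedGroup.mk S) v (rel j) = 1
    ext
    · show (ψ B (PresentedGroup.mk S) v (rel j)).left = 1
      have := hv' j
      simp only [cfree] at this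
      rw [show (1 : Multiplicative B) = Multiplicative.ofAdd 0 from rfl]
      rw [← this]
      rfl
    · rw [ψ_right, mk_rel_eq_one hS]
      rfl
  set Ψ := PresentedGroup.toGroup hrel with hΨ
  have hcomp : Ψ.comp (PresentedGroup.mk S) = ψ B (PresentedGroup.mk S) v := by
    refine FreeGroup.ext_hom _ _ (fun i => ?_)
    show Ψ (PresentedGroup.of i) = _
    rw [PresentedGroup.toGroup.of]
    simp [ψ]
  have hright : ∀ γ : PresentedGroup S, (Ψ γ).right = γ := by
    have h : SemidirectProduct.rightHom.comp Ψ = MonoidHom.id _ := by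
      refine PresentedGroup.ext (fun i => ?_)
      show (Ψ (PresentedGroup.of i)).right = PresentedGroup.of i
      rw [PresentedGroup.toGroup.of]
      rfl
    exact fun γ => DFunLike.congr_fun h γ
  have hcoc : (fun γ => Multiplicative.toAdd (Ψ γ).left) ∈ cocycles₁ B := by
    rw [mem_cocycles₁_iff]
    intro a b
    rw [map_mul, SemidirectProduct.mul_left, toAdd_mul, hright, ρAut_apply]
    show _ = _ + _
    rw [add_comm]
    rfl
  refine ⟨⟨_, hcoc⟩, ?_⟩
  funext i
  show Multiplicative.toAdd (Ψ (PresentedGroup.of i)).left = v i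
  rw [PresentedGroup.toGroup.of]
  rfl

lemma range_res_eq (hS : S = Set.range rel) :
    LinearMap.range (res B) = LinearMap.ker (relEval B (PresentedGroup.mk S) rel) := by
  refine le_antisymm ?_ (ker_relEval_le_range_res B hS)
  rintro _ ⟨f, rfl⟩
  exact relEval_res B hS f

/-- `Z¹` of a presented group is the kernel of relator evaluation. -/
noncomputable def oneCocyclesEquiv (hS : S = Set.range rel) :
    cocycles₁ B ≃ₗ[k] LinearMap.ker (relEval B (PresentedGroup.mk S) rel) :=
  (LinearEquiv.ofInjective (res B) (res_injective B)).trans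
    (LinearEquiv.ofEq _ _ (range_res_eq B hS))

lemma finrank_oneCocycles_add (hS : S = Set.range rel) [Fintype β] [FiniteDimensional k B] :
    finrank k (cocycles₁ B) +
      finrank k (LinearMap.range (relEval B (PresentedGroup.mk S) rel)) =
    Fintype.card β * finrank k B := by
  rw [(oneCocyclesEquiv B hS).finrank_eq]
  rw [add_comm, LinearMap.finrank_range_add_finrank_ker]
  rw [Module.finrank_pi_fintype]
  simp [Finset.sum_const, Finset.card_univ]

end Presented

section H1count

variable (B : Rep k G) [FiniteDimensional k B] [FiniteDimensional k (cocycles₁ B)]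

lemma finrank_H1_add :
    finrank k (groupCohomology B 1) + finrank k B =
      finrank k (cocycles₁ B) + finrank k (groupCohomology B 0) := by
  have e1 : finrank k (groupCohomology B 1) =
      finrank k ((shortComplexH1 B).moduleCatLeftHomologyData.H) :=
    (groupCohomology.H1Iso B).toLinearEquiv.finrank_eq
  have e0 : finrank k (groupCohomology B 0) = finrank k (B.ρ.invariants) :=
    (groupCohomology.H0Iso B).toLinearEquiv.finrank_eq
  haveI : FiniteDimensional k (LinearMap.ker (shortComplexH1 B).g.hom) :=
    ‹FiniteDimensional k (cocycles₁ B)›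
  have h2 : finrank k ((shortComplexH1 B).moduleCatLeftHomologyData.H) +
      finrank k (LinearMap.range (shortComplexH1 B).moduleCatToCycles) =
        finrank k (cocycles₁ B) :=
    Submodule.finrank_quotient_add_finrank _
  have h3 : finrank k (LinearMap.range (shortComplexH1 B).moduleCatToCycles) =
      finrank k (LinearMap.range (d₀₁ B).hom) := by
    have heq : Submodule.map (LinearMap.ker (shortComplexH1 B).g.hom).subtype
        (LinearMap.range (shortComplexH1 B).moduleCatToCycles) =
        LinearMap.range (d₀₁ B).hom := by
      rw [← LinearMap.range_comp]
      exact congrArg LinearMap.range (LinearMap.ext fun x => rfl)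
    rw [← heq]
    exact (Submodule.equivMapOfInjective _ (Submodule.injective_subtype _) _).finrank_eq
  have h4 : finrank k (LinearMap.range (d₀₁ B).hom) + finrank k (LinearMap.ker (d₀₁ B).hom) =
      finrank k B := LinearMap.finrank_range_add_finrank_ker _
  have h5 : finrank k (LinearMap.ker (d₀₁ B).hom) = finrank k (B.ρ.invariants) := by
    rw [d₀₁_ker_eq_invariants]
  omega

end H1count



section RankAux

variable {V W U : Type} [AddCommGroup V] [Module k V] [AddCommGroup W] [Module k W]
  [AddCommGroup U] [Module k U]

/-- `p.prod q` is equivalent to `p × q`. -/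
noncomputable def subProdEquiv (p : Submodule k V) (q : Submodule k W) :
    (p.prod q) ≃ₗ[k] p × q where
  toFun x := (⟨x.1.1, x.2.1⟩, ⟨x.1.2, x.2.2⟩)
  map_add' _ _ := rfl
  map_smul' _ _ := rfl
  invFun y := ⟨(y.1.1, y.2.1), ⟨y.1.2, y.2.2⟩⟩
  left_inv _ := rfl
  right_inv _ := rfl

lemma finrank_range_prod_le [Module.Finite k U]
    (f : U →ₗ[k] V) (g : U →ₗ[k] W) :
    finrank k (LinearMap.range (f.prod g)) ≤
      finrank k (LinearMap.range f) + finrank k (LinearMap.range g) := by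
  haveI h1 : Module.Finite k (LinearMap.range f) := Module.Finite.range f
  haveI h2 : Module.Finite k (LinearMap.range g) := Module.Finite.range g
  haveI : Module.Finite k ((LinearMap.range f).prod (LinearMap.range g)) :=
    Module.Finite.equiv (subProdEquiv (LinearMap.range f) (LinearMap.range g)).symm
  calc finrank k (LinearMap.range (f.prod g))
      ≤ finrank k ((LinearMap.range f).prod (LinearMap.range g)) :=
        Submodule.finrank_mono (LinearMap.range_prod_le f g)
    _ = finrank k ((LinearMap.range f) × (LinearMap.range g)) :=
        (subProdEquiv _ _).finrank_eq
    _ = _ := Module.finrank_prod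

end RankAux

end PresExt

open PresExt Module groupCohomology



namespace PresExt

variable {k : Type} [Field k]

section Main

theorem aux_main {β γ ι : Type} [Fintype β] [Fintype γ]
    (rel : ι → FreeGroup β) (ex : γ → FreeGroup (β ⊕ γ))
    {S' : Set (FreeGroup (β ⊕ γ))}
    (hS' : S' = Set.range (Sum.elim (fun j => FreeGroup.map Sum.inl (rel j)) ex))
    (φ : PresentedGroup (Set.range rel) →* PresentedGroup S')
    (hφ : ∀ i : β, φ (PresentedGroup.of i) = PresentedGroup.of (Sum.inl i))
    (A : Rep k (PresentedGroup S')) [FiniteDimensional k A]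
    (h0 : Module.finrank k (groupCohomology (Rep.of (A.ρ.comp φ)) 0) =
      Module.finrank k (groupCohomology A 0)) :
    Module.finrank k (groupCohomology (Rep.of (A.ρ.comp φ)) 1) ≤
      Module.finrank k (groupCohomology A 1) := by
  classical
  let B : Rep k (PresentedGroup (Set.range rel)) := Rep.of (A.ρ.comp φ)
  haveI hBfd : FiniteDimensional k B := inferInstanceAs (FiniteDimensional k A)
  let π : FreeGroup β →* PresentedGroup (Set.range rel) := PresentedGroup.mk (Set.range rel)
  let π' : FreeGroup (β ⊕ γ) →* PresentedGroup S' := PresentedGroup.mk S'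
  let rel' : (ι ⊕ γ) → FreeGroup (β ⊕ γ) :=
    Sum.elim (fun j => FreeGroup.map Sum.inl (rel j)) ex
  let E : (β → B) →ₗ[k] (ι → B) := relEval B π rel
  let E' : ((β ⊕ γ) → A) →ₗ[k] ((ι ⊕ γ) → A) := relEval A π' rel'
  haveI : FiniteDimensional k (cocycles₁ B) :=
    (oneCocyclesEquiv B rfl).symm.finiteDimensional
  haveI : FiniteDimensional k (cocycles₁ A) :=
    (oneCocyclesEquiv A hS').symm.finiteDimensional
  -- compatibility
  have compat : ∀ (v : (β ⊕ γ) → A) (w : FreeGroup β),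
      cfree A π' v (FreeGroup.map Sum.inl w) = cfree B π (fun i => v (Sum.inl i)) w := by
    intro v w
    have hcond : ∀ δ : PresentedGroup (Set.range rel),
        (MonoidHom.id (Multiplicative A)).comp ((ρAut B δ).toMonoidHom) =
          ((ρAut A (φ δ)).toMonoidHom).comp (MonoidHom.id (Multiplicative A)) := by
      intro δ
      ext x
      rfl
    have key : (SemidirectProduct.map (MonoidHom.id (Multiplicative A)) φ hcond).comp
          (ψ B π (fun i => v (Sum.inl i))) =
        (ψ A π' v).comp (FreeGroup.map Sum.inl) := by
      refine FreeGroup.ext_hom _ _ (fun i => ?_)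
      have step1 : (ψ A π' v) (FreeGroup.map Sum.inl (FreeGroup.of i)) =
          (ψ A π' v) (FreeGroup.of (Sum.inl i)) := congrArg _ (FreeGroup.map.of)
      have step2 : (ψ A π' v) (FreeGroup.of (Sum.inl i)) =
          ⟨Multiplicative.ofAdd (v (Sum.inl i)), π' (FreeGroup.of (Sum.inl i))⟩ :=
        FreeGroup.lift_apply_of
      have step3 : (SemidirectProduct.map (MonoidHom.id (Multiplicative A)) φ hcond)
            ((ψ B π (fun j => v (Sum.inl j))) (FreeGroup.of i)) =
          (SemidirectProduct.map (MonoidHom.id (Multiplicative A)) φ hcond)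
            ⟨Multiplicative.ofAdd (v (Sum.inl i)), π (FreeGroup.of i)⟩ :=
        congrArg _ FreeGroup.lift_apply_of
      have step5 : (SemidirectProduct.map (MonoidHom.id (Multiplicative A)) φ hcond)
            ⟨Multiplicative.ofAdd (v (Sum.inl i)), π (FreeGroup.of i)⟩ =
          ⟨Multiplicative.ofAdd (v (Sum.inl i)), π' (FreeGroup.of (Sum.inl i))⟩ := by
        ext
        · rfl
        · exact hφ i
      exact (step3.trans step5).trans (step1.trans step2).symm
    have h2 := DFunLike.congr_fun key w
    simp only [MonoidHom.comp_apply] at h2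
    show Multiplicative.toAdd (ψ A π' v (FreeGroup.map Sum.inl w)).left = _
    rw [← h2]
    rfl
  -- the two projections
  let L1 : ((ι ⊕ γ) → A) →ₗ[k] (ι → A) := LinearMap.funLeft k A (Sum.inl : ι → ι ⊕ γ)
  let L2 : ((ι ⊕ γ) → A) →ₗ[k] (γ → A) := LinearMap.funLeft k A (Sum.inr : γ → ι ⊕ γ)
  let P : ((β ⊕ γ) → A) →ₗ[k] (β → B) := LinearMap.funLeft k A (Sum.inl : β → β ⊕ γ)
  have hcomp : L1.comp E' = E.comp P := by
    refine LinearMap.ext fun v => funext fun j => ?_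
    show cfree A π' v (rel' (Sum.inl j)) = cfree B π (fun i => v (Sum.inl i)) (rel j)
    exact compat v (rel j)
  have hinj : Function.Injective (L1.prod L2) := by
    intro x y h
    funext s
    cases s with
    | inl a => exact congr_fun (congrArg Prod.fst h) a
    | inr a => exact congr_fun (congrArg Prod.snd h) a
  -- rank bound
  have hrank : finrank k (LinearMap.range E') ≤
      finrank k (LinearMap.range E) + Fintype.card γ * finrank k A := by
    have e1 : finrank k (LinearMap.range E') =
        finrank k (LinearMap.range ((L1.prod L2).comp E')) := by
      rw [LinearMap.range_comp]
      exact (Submodule.equivMapOfInjective _ hinj _).finrank_eq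
    rw [e1, LinearMap.prod_comp]
    refine le_trans (finrank_range_prod_le _ _) (add_le_add ?_ ?_)
    · rw [hcomp]
      haveI : Module.Finite k (LinearMap.range E) := Module.Finite.range E
      exact Submodule.finrank_mono (LinearMap.range_comp_le_range P E)
    · refine le_trans (Submodule.finrank_le _) ?_
      rw [Module.finrank_pi_fintype]
      simp [Finset.sum_const, Finset.card_univ]
  -- dimension counts
  have hZ : finrank k (cocycles₁ B) + finrank k (LinearMap.range E) =
      Fintype.card β * finrank k B :=
    finrank_oneCocycles_add B (rfl : Set.range rel = Set.range rel)
  have hZ' : finrank k (cocycles₁ A) + finrank k (LinearMap.range E') =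
      (Fintype.card β + Fintype.card γ) * finrank k A := by
    have h := finrank_oneCocycles_add A hS'
    rwa [Fintype.card_sum] at h
  have hH1 : finrank k (groupCohomology B 1) + finrank k B =
      finrank k (cocycles₁ B) + finrank k (groupCohomology B 0) := finrank_H1_add B
  have hH1' : finrank k (groupCohomology A 1) + finrank k A =
      finrank k (cocycles₁ A) + finrank k (groupCohomology A 0) := finrank_H1_add A
  have hd : finrank k B = finrank k A := rfl
  rw [hd] at hZ hH1
  rw [Nat.add_mul] at hZ'
  show finrank k (groupCohomology B 1) ≤ finrank k (groupCohomology A 1)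
  have h0' : finrank k (groupCohomology B 0) = finrank k (groupCohomology A 0) := h0
  omega

end Main

end PresExt

theorem dim_H1_le_of_presentation_extension
    (g r m : ℕ) (k : Type) [Field k]
    (rels : Fin r → FreeGroup (Fin g))
    (extra : Fin m → FreeGroup (Fin g ⊕ Fin m))
    (φ : PresentedGroup (Set.range rels) →*
      PresentedGroup
        ((Set.range fun j => FreeGroup.map Sum.inl (rels j)) ∪ Set.range extra))
    (hφ : ∀ i : Fin g,
      φ (PresentedGroup.of i) =
        PresentedGroup.of
          (rels := (Set.range fun j => FreeGroup.map Sum.inl (rels j)) ∪ Set.range extra)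
          (Sum.inl i))
    (A : Rep k (PresentedGroup
        ((Set.range fun j => FreeGroup.map Sum.inl (rels j)) ∪ Set.range extra)))
    [FiniteDimensional k A]
    (h0 : Module.finrank k (groupCohomology (Rep.of (A.ρ.comp φ)) 0) =
      Module.finrank k (groupCohomology A 0)) :
    Module.finrank k (groupCohomology (Rep.of (A.ρ.comp φ)) 1) ≤
      Module.finrank k (groupCohomology A 1) := by
  have hS' : (Set.range fun j => FreeGroup.map Sum.inl (rels j)) ∪ Set.range extra =
      Set.range (Sum.elim (fun j => FreeGroup.map Sum.inl (rels j)) extra) := by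
    rw [Set.Sum.elim_range]
  have hle := PresExt.aux_main rels extra hS' φ hφ A h0
  exact hle
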